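/- SubTuring reducibility is transitive: if f ≤subT g and g ≤subT h, then f ≤subT h. -/

import Mathlib

open Classical

noncomputable section

/-- `as` is a valid answer history for the sequential oracle computation of `Φ`
with oracle `g` on input `n`: at each round `k`, the machine outputs a query
`(false, q)` with `q` in the domain of `g`, answered by `g q = as[k]`. -/
def ValidHist (Φ : List ℕ →. Bool × ℕ) (g : ℕ →. ℕ) (n : ℕ) (as : List ℕ) : Prop :=
  ∀ (k : ℕ) (hk : k < as.length), ∃ q : ℕ,
    (false, q) ∈ Φ (n :: as.take k) ∧ (as[k]'hk) ∈ g q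

/-- The sequential oracle computation `Φ[g](n)` halts with output `m`. -/
def HaltsTo (Φ : List ℕ →. Bool × ℕ) (g : ℕ →. ℕ) (n m : ℕ) : Prop :=
  ∃ as : List ℕ, ValidHist Φ g n as ∧ (true, m) ∈ Φ (n :: as)

/-- subTuring reducibility: `f ⊆ Φ[g]` for some partial computable `Φ`. -/
def SubTuringLE (f g : ℕ →. ℕ) : Prop :=
  ∃ Φ : List ℕ →. Bool × ℕ, Partrec Φ ∧ ∀ n m, m ∈ f n → HaltsTo Φ g n m

/-- subTuring equivalence. -/
def SubTuringEquiv (f g : ℕ →. ℕ) : Prop := SubTuringLE f g ∧ SubTuringLE g f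

/-! ### Auxiliary machinery for transitivity -/

namespace SubTuringTrans

/-- General `Sum.casesOn` for partial recursive functions in both branches. -/
theorem _root_.Partrec.sum_casesOn' {α β γ σ : Type*} [Primcodable α] [Primcodable β]
    [Primcodable γ] [Primcodable σ]
    {s : α → β ⊕ γ} {g : α → β →. σ} {h : α → γ →. σ}
    (hs : Computable s) (hg : Partrec₂ g) (hh : Partrec₂ h) :
    Partrec fun a => Sum.casesOn (s a) (g a) (h a) := by
  have hX : Partrec fun a =>
      (Sum.casesOn (s a) (fun b => Part.some (Sum.inl b : β ⊕ σ))
        (fun c => (h a c).map Sum.inr) : Part (β ⊕ σ)) :=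
    Partrec.sumCasesOn_right hs (Computable.sumInl.comp Computable.snd).to₂
      ((hh.map ((Computable.sumInr.comp Computable.snd).to₂)).to₂)
  have hk : Partrec₂ fun (a : α) (r : β ⊕ σ) => Sum.casesOn r (g a) (fun v => Part.some v) :=
    Partrec.sumCasesOn_left (Computable.snd)
      ((hg.comp (Computable.fst.comp Computable.fst) Computable.snd).to₂)
      (Computable.snd.to₂)
  exact (hX.bind hk).of_eq fun a => by
    cases s a with
    | inl b => simp
    | inr c =>
      ext v
      simp

/-- General `Option.casesOn` for partial recursive functions in both branches. -/
theorem _root_.Partrec.option_casesOn' {α β σ : Type*} [Primcodable α] [Primcodable β]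
    [Primcodable σ]
    {o : α → Option β} {f : α →. σ} {g : α → β →. σ}
    (ho : Computable o) (hf : Partrec f) (hg : Partrec₂ g) :
    Partrec fun a => Option.casesOn (o a) (f a) (g a) := by
  have hs : Computable fun a => (Option.casesOn (o a) (Sum.inl 0) Sum.inr : ℕ ⊕ β) :=
    Computable.option_casesOn ho (Computable.const _)
      ((Computable.sumInr.comp Computable.snd).to₂)
  have := Partrec.sum_casesOn' (g := fun a (_ : ℕ) => f a) (h := g) hs
    ((hf.comp Computable.fst).to₂) hg
  exact this.of_eq fun a => by cases o a <;> rfl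

/-- The state of the composed machine: input, history of outer (`g`-)answers,
optionally a current outer query together with the history of inner (`h`-)answers
for it, and the remaining unconsumed list of `h`-answers. -/
abbrev St : Type := ℕ × List ℕ × Option (ℕ × List ℕ) × List ℕ

/-- The (total) decision function: given a state and the oracle machine's output,
decide how to proceed. -/
def dec (x : St) (p : Bool × ℕ) : (Bool × ℕ) ⊕ St :=
  Option.casesOn (motive := fun _ => (Bool × ℕ) ⊕ St) x.2.2.1
    (bif p.1 then Sum.inl p else Sum.inr (x.1, x.2.1, some (p.2, []), x.2.2.2))
    fun qc =>
      bif p.1 then Sum.inr (x.1, x.2.1 ++ [p.2], none, x.2.2.2)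
      else Option.casesOn (motive := fun _ => (Bool × ℕ) ⊕ St) x.2.2.2.head? (Sum.inl p)
        fun b => Sum.inr (x.1, x.2.1, some (qc.1, qc.2 ++ [b]), x.2.2.2.tail)

/-- One step of the composed machine. -/
def stepF (Φ₁ Φ₂ : List ℕ →. Bool × ℕ) (x : St) : Part ((Bool × ℕ) ⊕ St) :=
  (Option.casesOn (motive := fun _ => Part (Bool × ℕ)) x.2.2.1
    (Φ₁ (x.1 :: x.2.1)) fun qc => Φ₂ (qc.1 :: qc.2)).map (dec x)

/-- The composed machine. -/
def Psi (Φ₁ Φ₂ : List ℕ →. Bool × ℕ) (l : List ℕ) : Part (Bool × ℕ) :=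
  PFun.fix (stepF Φ₁ Φ₂) (l.headI, [], none, l.tail)

theorem psi_cons (Φ₁ Φ₂ : List ℕ →. Bool × ℕ) (n : ℕ) (l : List ℕ) :
    Psi Φ₁ Φ₂ (n :: l) = PFun.fix (stepF Φ₁ Φ₂) (n, [], none, l) := rfl

theorem dec_computable : Computable₂ dec := by
  have p1 : Computable fun y : St × (Bool × ℕ) => y.1.2.2.1 :=
    Computable.fst.comp (Computable.snd.comp (Computable.snd.comp Computable.fst))
  have hA : Computable fun y : St × (Bool × ℕ) =>
      (bif y.2.1 then Sum.inl y.2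
        else Sum.inr (y.1.1, y.1.2.1, some (y.2.2, ([] : List ℕ)), y.1.2.2.2) :
        (Bool × ℕ) ⊕ St) := by
    apply Computable.cond (Computable.fst.comp Computable.snd)
      (Computable.sumInl.comp Computable.snd)
    exact Computable.sumInr.comp
      ((Computable.fst.comp Computable.fst).pair
        (((Computable.fst.comp (Computable.snd.comp Computable.fst))).pair
          ((Computable.option_some.comp ((Computable.snd.comp Computable.snd).pair
            (Computable.const ([] : List ℕ)))).pair
            (Computable.snd.comp (Computable.snd.comp
              (Computable.snd.comp Computable.fst))))))
  have hB : Computable₂ fun (y : St × (Bool × ℕ)) (qc : ℕ × List ℕ) =>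
      (bif y.2.1 then Sum.inr (y.1.1, y.1.2.1 ++ [y.2.2], none, y.1.2.2.2)
        else Option.casesOn y.1.2.2.2.head? (Sum.inl y.2)
          fun b => Sum.inr (y.1.1, y.1.2.1, some (qc.1, qc.2 ++ [b]), y.1.2.2.2.tail) :
        (Bool × ℕ) ⊕ St) := by
    -- work on z : (St × (Bool × ℕ)) × (ℕ × List ℕ)
    have y1 : Computable fun z : (St × (Bool × ℕ)) × (ℕ × List ℕ) => z.1.1 :=
      Computable.fst.comp Computable.fst
    have y2 : Computable fun z : (St × (Bool × ℕ)) × (ℕ × List ℕ) => z.1.2 :=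
      Computable.snd.comp Computable.fst
    have rem : Computable fun z : (St × (Bool × ℕ)) × (ℕ × List ℕ) => z.1.1.2.2.2 :=
      Computable.snd.comp (Computable.snd.comp (Computable.snd.comp y1))
    apply Computable.cond (Computable.fst.comp y2)
    · exact Computable.sumInr.comp
        ((Computable.fst.comp y1).pair
          (((Computable.list_concat.comp (Computable.fst.comp (Computable.snd.comp y1))
              (Computable.snd.comp y2))).pair
            ((Computable.const (none : Option (ℕ × List ℕ))).pair rem)))
    · apply Computable.option_casesOn (Primrec.list_head?.to_comp.comp rem)
        (Computable.sumInl.comp y2)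
      -- w : ((St × (Bool × ℕ)) × (ℕ × List ℕ)) × ℕ
      have w1 : Computable fun w : ((St × (Bool × ℕ)) × (ℕ × List ℕ)) × ℕ => w.1.1.1 :=
        Computable.fst.comp (Computable.fst.comp Computable.fst)
      have wqc : Computable fun w : ((St × (Bool × ℕ)) × (ℕ × List ℕ)) × ℕ => w.1.2 :=
        Computable.snd.comp Computable.fst
      exact (Computable.sumInr.comp
        ((Computable.fst.comp w1).pair
          ((Computable.fst.comp (Computable.snd.comp w1)).pair
            ((Computable.option_some.comp ((Computable.fst.comp wqc).pair
              (Computable.list_concat.comp (Computable.snd.comp wqc) Computable.snd))).pair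
              (Primrec.list_tail.to_comp.comp (Computable.snd.comp (Computable.snd.comp
                (Computable.snd.comp w1)))))))).to₂
  have := Computable.option_casesOn p1 hA hB
  exact this.of_eq fun y => by
    obtain ⟨⟨n', as', o', rem'⟩, p'⟩ := y
    cases o' <;> rfl

theorem stepF_partrec {Φ₁ Φ₂ : List ℕ →. Bool × ℕ} (h₁ : Partrec Φ₁) (h₂ : Partrec Φ₂) :
    Partrec (stepF Φ₁ Φ₂) := by
  have hsel : Partrec fun x : St =>
      Option.casesOn x.2.2.1 (Φ₁ (x.1 :: x.2.1)) fun qc => Φ₂ (qc.1 :: qc.2) := by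
    apply Partrec.option_casesOn'
      (Computable.fst.comp (Computable.snd.comp Computable.snd))
      (h₁.comp (Computable.list_cons.comp Computable.fst
        (Computable.fst.comp Computable.snd)))
    exact (h₂.comp (Computable.list_cons.comp (Computable.fst.comp Computable.snd)
      (Computable.snd.comp Computable.snd))).to₂
  exact hsel.map dec_computable

theorem psi_partrec {Φ₁ Φ₂ : List ℕ →. Bool × ℕ} (h₁ : Partrec Φ₁) (h₂ : Partrec Φ₂) :
    Partrec (Psi Φ₁ Φ₂) :=
  (stepF_partrec h₁ h₂).fix.comp
    (Primrec.list_headI.to_comp.pair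
      ((Computable.const ([] : List ℕ)).pair
        ((Computable.const (none : Option (ℕ × List ℕ))).pair Primrec.list_tail.to_comp)))

/-! ### Single step facts -/

variable {Φ₁ Φ₂ : List ℕ →. Bool × ℕ} {g h : ℕ →. ℕ}

theorem step_true {n m : ℕ} {as rem : List ℕ} (hm : (true, m) ∈ Φ₁ (n :: as)) :
    Sum.inl (true, m) ∈ stepF Φ₁ Φ₂ (n, as, none, rem) :=
  Part.mem_map (dec (n, as, none, rem)) hm

theorem step_query {n q : ℕ} {as rem : List ℕ} (hq : (false, q) ∈ Φ₁ (n :: as)) :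
    Sum.inr (n, as, some (q, []), rem) ∈ stepF Φ₁ Φ₂ (n, as, none, rem) :=
  Part.mem_map (dec (n, as, none, rem)) hq

theorem step_inner_true {n q a : ℕ} {as cs rem : List ℕ} (ha : (true, a) ∈ Φ₂ (q :: cs)) :
    Sum.inr (n, as ++ [a], none, rem) ∈ stepF Φ₁ Φ₂ (n, as, some (q, cs), rem) :=
  Part.mem_map (dec (n, as, some (q, cs), rem)) ha

theorem step_inner_query_out {n q r : ℕ} {as cs : List ℕ} (hr : (false, r) ∈ Φ₂ (q :: cs)) :
    Sum.inl (false, r) ∈ stepF Φ₁ Φ₂ (n, as, some (q, cs), []) :=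
  Part.mem_map (dec (n, as, some (q, cs), [])) hr

theorem step_inner_query_cons {n q r b : ℕ} {as cs rem : List ℕ}
    (hr : (false, r) ∈ Φ₂ (q :: cs)) :
    Sum.inr (n, as, some (q, cs ++ [b]), rem) ∈ stepF Φ₁ Φ₂ (n, as, some (q, cs), b :: rem) :=
  Part.mem_map (dec (n, as, some (q, cs), b :: rem)) hr

/-! ### Runs -/

theorem validHist_take {Φ : List ℕ →. Bool × ℕ} {g : ℕ →. ℕ} {n : ℕ} {l : List ℕ}
    (hv : ValidHist Φ g n l) (i : ℕ) : ValidHist Φ g n (l.take i) := by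
  intro k hk
  have hk2 : k < i ∧ k < l.length := by simpa using hk
  obtain ⟨q, hq, hgq⟩ := hv k hk2.2
  refine ⟨q, ?_, ?_⟩
  · rwa [List.take_take, min_eq_left (le_of_lt hk2.1)]
  · simpa using hgq

theorem inner_run {n q : ℕ} {as cs : List ℕ} (hv : ValidHist Φ₂ h q cs) :
    ∀ d i, cs.length - i = d → i ≤ cs.length → ∀ t,
      PFun.fix (stepF Φ₁ Φ₂) (n, as, some (q, cs.take i), cs.drop i ++ t) =
        PFun.fix (stepF Φ₁ Φ₂) (n, as, some (q, cs), t) := by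
  intro d
  induction d with
  | zero =>
    intro i hd hi t
    have : i = cs.length := le_antisymm hi (Nat.le_of_sub_eq_zero hd)
    subst this
    simp
  | succ d ih =>
    intro i hd hi t
    have hi' : i < cs.length := by omega
    obtain ⟨r, hr, _⟩ := hv i hi'
    have hdrop : cs.drop i = cs[i] :: cs.drop (i + 1) := List.drop_eq_getElem_cons hi'
    rw [hdrop, List.cons_append,
      PFun.fix_fwd_eq (step_inner_query_cons (b := cs[i]) hr)]
    have htake : cs.take i ++ [cs[i]] = cs.take (i + 1) := by
      simpa using List.take_concat_get cs i hi'
    rw [htake]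
    exact ih (i + 1) (by omega) (by omega) t

/-! ### Main simulation section -/

section Sim

variable {n : ℕ} {as : List ℕ} {qf : ℕ → ℕ} {csf : ℕ → List ℕ}

/-- Concatenated inner histories. -/
def Hist (csf : ℕ → List ℕ) : ℕ → List ℕ
  | 0 => []
  | k + 1 => Hist csf k ++ csf k

theorem outer_run
    (hq : ∀ k, k < as.length → (false, qf k) ∈ Φ₁ (n :: as.take k))
    (hcs : ∀ k (hk : k < as.length),
      ValidHist Φ₂ h (qf k) (csf k) ∧ (true, as[k]) ∈ Φ₂ (qf k :: csf k)) :
    ∀ k, k ≤ as.length → ∀ t,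
      PFun.fix (stepF Φ₁ Φ₂) (n, [], none, Hist csf k ++ t) =
        PFun.fix (stepF Φ₁ Φ₂) (n, as.take k, none, t) := by
  intro k
  induction k with
  | zero => intro _ t; simp [Hist]
  | succ k ih =>
    intro hk t
    have hk' : k < as.length := hk
    obtain ⟨hvk, htk⟩ := hcs k hk'
    rw [show Hist csf (k + 1) = Hist csf k ++ csf k from rfl,
      List.append_assoc, ih (le_of_lt hk')]
    rw [PFun.fix_fwd_eq (step_query (hq k hk'))]
    have := inner_run (Φ₁ := Φ₁) (n := n) (as := as.take k) hvk (cs := csf k)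
      ((csf k).length) 0 rfl (Nat.zero_le _) t
    simp only [List.take_zero, List.drop_zero] at this
    rw [this, PFun.fix_fwd_eq (step_inner_true htk)]
    have : as.take k ++ [as[k]] = as.take (k + 1) := by
      simpa using List.take_concat_get as k hk'
    rw [this]

theorem query_run
    (hq : ∀ k, k < as.length → (false, qf k) ∈ Φ₁ (n :: as.take k))
    (hcs : ∀ k (hk : k < as.length),
      ValidHist Φ₂ h (qf k) (csf k) ∧ (true, as[k]) ∈ Φ₂ (qf k :: csf k)) :
    ∀ k (hk : k < as.length) i (hi : i < (csf k).length), ∃ r,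
      (false, r) ∈ PFun.fix (stepF Φ₁ Φ₂) (n, [], none, Hist csf k ++ (csf k).take i) ∧
        ((csf k)[i]) ∈ h r := by
  intro k hk i hi
  obtain ⟨hvk, _⟩ := hcs k hk
  obtain ⟨r, hr, hhr⟩ := hvk i hi
  refine ⟨r, ?_, hhr⟩
  rw [outer_run hq hcs k (le_of_lt hk)]
  rw [PFun.fix_fwd_eq (step_query (hq k hk))]
  have hv' : ValidHist Φ₂ h (qf k) ((csf k).take i) := validHist_take hvk i
  have := inner_run (Φ₁ := Φ₁) (n := n) (as := as.take k) hv' (cs := (csf k).take i)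
    (((csf k).take i).length) 0 rfl (Nat.zero_le _) []
  simp only [List.take_zero, List.drop_zero, List.append_nil] at this
  rw [this]
  exact PFun.fix_stop (step_inner_query_out hr)

end Sim

end SubTuringTrans

open SubTuringTrans in
theorem subTuringLE_trans (f g h : ℕ →. ℕ)
    (hfg : SubTuringLE f g) (hgh : SubTuringLE g h) : SubTuringLE f h := by
  obtain ⟨Φ₁, hΦ₁, H₁⟩ := hfg
  obtain ⟨Φ₂, hΦ₂, H₂⟩ := hgh
  refine ⟨Psi Φ₁ Φ₂, psi_partrec hΦ₁ hΦ₂, ?_⟩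
  intro n m hm
  obtain ⟨as, hv, ht⟩ := H₁ n m hm
  -- choose outer queries and inner histories
  have hex : ∀ k : ℕ, ∃ (qk : ℕ) (ck : List ℕ), k < as.length →
      (false, qk) ∈ Φ₁ (n :: as.take k) ∧ ValidHist Φ₂ h qk ck ∧
        (∀ (hk : k < as.length), (true, as[k]) ∈ Φ₂ (qk :: ck)) := by
    intro k
    by_cases hk : k < as.length
    · obtain ⟨q, hq, hgq⟩ := hv k hk
      obtain ⟨ck, hvk, htk⟩ := H₂ q (as[k]'hk) hgq
      exact ⟨q, ck, fun _ => ⟨hq, hvk, fun _ => htk⟩⟩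
    · exact ⟨0, [], fun hk' => absurd hk' hk⟩
  choose qf csf hqcs using hex
  have hq : ∀ k, k < as.length → (false, qf k) ∈ Φ₁ (n :: as.take k) :=
    fun k hk => (hqcs k hk).1
  have hcs : ∀ k (hk : k < as.length),
      ValidHist Φ₂ h (qf k) (csf k) ∧ (true, as[k]) ∈ Φ₂ (qf k :: csf k) :=
    fun k hk => ⟨(hqcs k hk).2.1, (hqcs k hk).2.2 hk⟩
  refine ⟨Hist csf as.length, ?_, ?_⟩
  · -- valid history
    -- prove by induction: ValidHist (Psi Φ₁ Φ₂) h n (Hist csf k) for all k ≤ L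
    suffices H : ∀ k, k ≤ as.length → ValidHist (Psi Φ₁ Φ₂) h n (Hist csf k) from
      H as.length le_rfl
    intro k
    induction k with
    | zero => intro _ j hj; simp [show Hist csf 0 = [] from rfl] at hj
    | succ k ih =>
      intro hk j hj
      have hk' : k < as.length := hk
      have ihk := ih (le_of_lt hk')
      simp only [show Hist csf (k + 1) = Hist csf k ++ csf k from rfl] at hj ⊢
      simp only [List.length_append] at hj
      rcases lt_or_ge j (Hist csf k).length with hl | hl
      · obtain ⟨r, hr, hhr⟩ := ihk j hl
        refine ⟨r, ?_, ?_⟩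
        · rwa [List.take_append_of_le_length hl.le]
        · rw [List.getElem_append_left hl]; exact hhr
      · have hi : j - (Hist csf k).length < (csf k).length := by omega
        obtain ⟨r, hr, hhr⟩ := query_run hq hcs k hk' (j - (Hist csf k).length) hi
        refine ⟨r, ?_, ?_⟩
        · have hj' : j = (Hist csf k).length + (j - (Hist csf k).length) := by omega
          rw [hj', List.take_length_add_append, psi_cons]
          exact hr
        · rw [List.getElem_append_right hl]; exact hhr
  · -- halts with m
    have := outer_run hq hcs as.length le_rfl []
    simp only [List.append_nil, List.take_length] at this
    rw [psi_cons, this]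
    exact PFun.fix_stop (step_true ht)
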